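/- Lemma 2: bound on the total variation of inverse AdaRem step sizes. Let η > 0, λ ∈ [0,1), T ≥ 2, and let (c_t)_{t≥1} be a real sequence with |c_t| ≤ 1 for all t. Define η_t = (η/√t)·(1 + λ^t·c_t) for t ≥ 1. Then ∑_{t=2}^T |η_t^{−1} − η_{t−1}^{−1}| ≤ (2/(η·(1−λ)³))·((5 − 4λ)·√T + 2λ − 1). -/

import Mathlib

/-- Helper: difference of two quotients bound. -/
lemma adarem_helper (η d s r x y A B : ℝ) (hη : 0 < η) (hd : 0 < d)
    (hx : d ≤ x) (hy : d ≤ y) (hr : 0 ≤ r) (hrs : r ≤ s) (hsA : s ≤ A)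
    (hB : 0 ≤ B) (hxy : |x - y| ≤ B) :
    |s / (η * x) - r / (η * y)| ≤ A * B / (η * d ^ 2) + (s - r) / (η * d) := by
  have hx0 : 0 < x := lt_of_lt_of_le hd hx
  have hy0 : 0 < y := lt_of_lt_of_le hd hy
  have hs : 0 ≤ s := hr.trans hrs
  have hA : 0 ≤ A := hs.trans hsA
  have h1 : s / (η * x) - s / (η * y) = s * (y - x) / (η * x * y) := by
    field_simp
  have h1' : |s / (η * x) - s / (η * y)| ≤ A * B / (η * d ^ 2) := by
    rw [h1, abs_div, abs_of_pos (by positivity : (0:ℝ) < η * x * y), abs_mul,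
      abs_of_nonneg hs]
    apply div_le_div₀ (by positivity) ?_ (by positivity) ?_
    · have hyx : |y - x| ≤ B := by rwa [abs_sub_comm]
      exact mul_le_mul hsA hyx (abs_nonneg _) hA
    · have : d * d ≤ x * y := mul_le_mul hx hy hd.le hx0.le
      nlinarith
  have h2 : |s / (η * y) - r / (η * y)| ≤ (s - r) / (η * d) := by
    rw [div_sub_div_same, abs_div, abs_of_pos (by positivity : (0:ℝ) < η * y),
      abs_of_nonneg (by linarith)]
    apply div_le_div₀ (by linarith) le_rfl (by positivity)
    nlinarith
  calc |s / (η * x) - r / (η * y)|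
      ≤ |s / (η * x) - s / (η * y)| + |s / (η * y) - r / (η * y)| :=
        abs_sub_le _ _ _
    _ ≤ A * B / (η * d ^ 2) + (s - r) / (η * d) := add_le_add h1' h2

/-- Lemma 2: bound on the total variation of inverse AdaRem step sizes. -/
theorem adarem_lemma2
    (η lam : ℝ) (hη : 0 < η) (hlam0 : 0 ≤ lam) (hlam1 : lam < 1)
    (T : ℕ) (hT : 2 ≤ T)
    (c : ℕ → ℝ) (hc : ∀ t, 1 ≤ t → |c t| ≤ 1)
    (ηt : ℕ → ℝ)
    (hηt : ∀ t, 1 ≤ t → ηt t = (η / Real.sqrt t) * (1 + lam ^ t * c t)) :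
    ∑ t ∈ Finset.Icc 2 T, |(ηt t)⁻¹ - (ηt (t - 1))⁻¹| ≤
      (2 / (η * (1 - lam) ^ 3)) * ((5 - 4 * lam) * Real.sqrt T + 2 * lam - 1) := by
  have hd : (0:ℝ) < 1 - lam := by linarith
  set C1 : ℝ := 2 * Real.sqrt T / (η * (1 - lam) ^ 2) with hC1
  set C2 : ℝ := 1 / (η * (1 - lam)) with hC2
  -- pointwise bound on each term
  have hbound : ∀ t ∈ Finset.Icc 2 T,
      |(ηt t)⁻¹ - (ηt (t - 1))⁻¹| ≤
        C1 * lam ^ (t - 1) + C2 * (Real.sqrt t - Real.sqrt ((t - 1 : ℕ))) := by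
    intro t ht
    rw [Finset.mem_Icc] at ht
    obtain ⟨ht2, htT⟩ := ht
    have ht1 : 1 ≤ t := by omega
    have ht1' : 1 ≤ t - 1 := by omega
    have hpow_t : lam ^ t ≤ lam ^ (t - 1) :=
      pow_le_pow_of_le_one hlam0 hlam1.le (by omega)
    have hpow1_t : lam ^ t ≤ lam := by
      calc lam ^ t ≤ lam ^ 1 := pow_le_pow_of_le_one hlam0 hlam1.le ht1
        _ = lam := pow_one lam
    have hpow1_t' : lam ^ (t - 1) ≤ lam := by
      calc lam ^ (t-1) ≤ lam ^ 1 := pow_le_pow_of_le_one hlam0 hlam1.le ht1'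
        _ = lam := pow_one lam
    have hct := abs_le.1 (hc t ht1)
    have hct' := abs_le.1 (hc (t - 1) ht1')
    have hpn : (0:ℝ) ≤ lam ^ t := pow_nonneg hlam0 t
    have hpn' : (0:ℝ) ≤ lam ^ (t - 1) := pow_nonneg hlam0 (t - 1)
    have hx : 1 - lam ≤ 1 + lam ^ t * c t := by nlinarith
    have hy : 1 - lam ≤ 1 + lam ^ (t - 1) * c (t - 1) := by nlinarith
    have hxy : |(1 + lam ^ t * c t) - (1 + lam ^ (t - 1) * c (t - 1))| ≤
        2 * lam ^ (t - 1) := by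
      have h1 : |lam ^ t * c t| ≤ lam ^ t := by
        rw [abs_mul, abs_of_nonneg hpn]
        exact mul_le_of_le_one_right hpn (hc t ht1)
      have h2 : |lam ^ (t - 1) * c (t - 1)| ≤ lam ^ (t - 1) := by
        rw [abs_mul, abs_of_nonneg hpn']
        exact mul_le_of_le_one_right hpn' (hc (t - 1) ht1')
      calc |(1 + lam ^ t * c t) - (1 + lam ^ (t - 1) * c (t - 1))|
          = |lam ^ t * c t - lam ^ (t - 1) * c (t - 1)| := by ring_nf
        _ ≤ |lam ^ t * c t| + |lam ^ (t - 1) * c (t - 1)| := abs_sub _ _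
        _ ≤ 2 * lam ^ (t - 1) := by linarith
    -- sqrt facts
    have hcast1 : (0:ℝ) < (t : ℝ) := by exact_mod_cast (by omega : 0 < t)
    have hcast1' : (0:ℝ) < ((t - 1 : ℕ) : ℝ) := by exact_mod_cast (by omega : 0 < t - 1)
    have hst : 0 < Real.sqrt t := Real.sqrt_pos.2 hcast1
    have hst' : (0:ℝ) ≤ Real.sqrt ((t - 1 : ℕ)) := Real.sqrt_nonneg _
    have hrs : Real.sqrt ((t - 1 : ℕ)) ≤ Real.sqrt t := by
      apply Real.sqrt_le_sqrt
      exact_mod_cast Nat.sub_le t 1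
    have hsA : Real.sqrt t ≤ Real.sqrt T := by
      apply Real.sqrt_le_sqrt
      exact_mod_cast htT
    -- rewrite inverses
    rw [hηt t ht1, hηt (t - 1) ht1']
    have e1 : ((η / Real.sqrt t) * (1 + lam ^ t * c t))⁻¹ =
        Real.sqrt t / (η * (1 + lam ^ t * c t)) := by
      rw [div_mul_eq_mul_div, inv_div]
    have e1' : ((η / Real.sqrt ((t - 1 : ℕ))) * (1 + lam ^ (t-1) * c (t-1)))⁻¹ =
        Real.sqrt ((t - 1 : ℕ)) / (η * (1 + lam ^ (t-1) * c (t-1))) := by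
      rw [div_mul_eq_mul_div, inv_div]
    rw [e1, e1']
    have := adarem_helper η (1 - lam) (Real.sqrt t) (Real.sqrt ((t - 1 : ℕ)))
      (1 + lam ^ t * c t) (1 + lam ^ (t-1) * c (t-1)) (Real.sqrt T)
      (2 * lam ^ (t - 1)) hη hd hx hy hst' hrs hsA (by positivity) hxy
    refine this.trans (le_of_eq ?_)
    rw [hC1, hC2]
    ring
  have hS := Finset.sum_le_sum hbound
  rw [Finset.sum_add_distrib, ← Finset.mul_sum, ← Finset.mul_sum] at hS
  -- geometric sum bound
  have hsum1 : ∑ t ∈ Finset.Icc 2 T, lam ^ (t - 1) ≤ lam / (1 - lam) := by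
    rw [← Finset.Ico_add_one_right_eq_Icc, Finset.sum_Ico_eq_sum_range]
    have he : ∀ i ∈ Finset.range (T + 1 - 2), lam ^ (2 + i - 1) = lam * lam ^ i := by
      intro i _
      have : 2 + i - 1 = i + 1 := by omega
      rw [this, pow_succ]
      ring
    rw [Finset.sum_congr rfl he, ← Finset.mul_sum]
    have hg : ∑ i ∈ Finset.range (T + 1 - 2), lam ^ i ≤ 1 / (1 - lam) := by
      rw [geom_sum_eq hlam1.ne]
      have heq : (lam ^ (T + 1 - 2) - 1) / (lam - 1) =
          (1 - lam ^ (T + 1 - 2)) / (1 - lam) := by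
        rw [← neg_div_neg_eq]
        ring_nf
      rw [heq]
      apply div_le_div₀ zero_le_one ?_ hd le_rfl
      nlinarith [pow_nonneg hlam0 (T + 1 - 2)]
    calc lam * ∑ i ∈ Finset.range (T + 1 - 2), lam ^ i
        ≤ lam * (1 / (1 - lam)) := mul_le_mul_of_nonneg_left hg hlam0
      _ = lam / (1 - lam) := by ring
  -- telescoping sum
  have hsum2 : ∑ t ∈ Finset.Icc 2 T, (Real.sqrt t - Real.sqrt ((t - 1 : ℕ)))
      = Real.sqrt T - 1 := by
    rw [← Finset.Ico_add_one_right_eq_Icc, Finset.sum_Ico_eq_sum_range]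
    have he : ∀ i ∈ Finset.range (T + 1 - 2),
        (Real.sqrt (2 + i : ℕ) - Real.sqrt ((2 + i - 1 : ℕ)))
          = (fun j : ℕ => Real.sqrt ((j : ℝ) + 1)) (i + 1)
            - (fun j : ℕ => Real.sqrt ((j : ℝ) + 1)) i := by
      intro i _
      simp only
      congr 1
      · congr 1
        push_cast
        ring
      · congr 1
        have : 2 + i - 1 = i + 1 := by omega
        rw [this]
        push_cast
        ring
    have htel := Finset.sum_range_sub (fun j : ℕ => Real.sqrt ((j:ℝ) + 1)) (T + 1 - 2)
    rw [Finset.sum_congr rfl he]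
    simp only
    rw [htel]
    have hT1 : T + 1 - 2 = T - 1 := by omega
    have hT2 : ((T - 1 : ℕ) : ℝ) + 1 = (T : ℝ) := by
      have : (T - 1) + 1 = T := by omega
      exact_mod_cast congrArg (Nat.cast : ℕ → ℝ) this
    simp only [hT1, hT2, Nat.cast_zero, zero_add, Real.sqrt_one]
  -- combine
  have hC1pos : 0 ≤ C1 := by
    rw [hC1]; positivity
  have hC2pos : 0 ≤ C2 := by
    rw [hC2]; positivity
  have hfinal : C1 * (lam / (1 - lam)) + C2 * (Real.sqrt T - 1) ≤
      (2 / (η * (1 - lam) ^ 3)) * ((5 - 4 * lam) * Real.sqrt T + 2 * lam - 1) := by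
    have hsT : 1 ≤ Real.sqrt T := by
      rw [show (1:ℝ) = Real.sqrt 1 by rw [Real.sqrt_one]]
      apply Real.sqrt_le_sqrt
      exact_mod_cast Nat.one_le_iff_ne_zero.2 (by omega)
    set s := Real.sqrt T with hs
    have hL : C1 * (lam / (1 - lam)) + C2 * (s - 1) =
        (2 * s * lam + (s - 1) * (1 - lam) ^ 2) / (η * (1 - lam) ^ 3) := by
      rw [hC1, hC2]
      field_simp
    have hR : (2 / (η * (1 - lam) ^ 3)) * ((5 - 4 * lam) * s + 2 * lam - 1) =
        (2 * ((5 - 4 * lam) * s + 2 * lam - 1)) / (η * (1 - lam) ^ 3) := by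
      ring
    rw [hL, hR]
    apply div_le_div_of_nonneg_right ?_ (by positivity)
    have h9 : (0:ℝ) ≤ 9 - 8 * lam - lam ^ 2 := by nlinarith
    nlinarith [mul_nonneg (sub_nonneg.2 hsT) h9]
  calc ∑ t ∈ Finset.Icc 2 T, |(ηt t)⁻¹ - (ηt (t - 1))⁻¹|
      ≤ C1 * (∑ t ∈ Finset.Icc 2 T, lam ^ (t - 1))
        + C2 * (∑ t ∈ Finset.Icc 2 T, (Real.sqrt t - Real.sqrt ((t - 1 : ℕ)))) := hS
    _ ≤ C1 * (lam / (1 - lam)) + C2 * (Real.sqrt T - 1) := by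
        apply add_le_add
        · exact mul_le_mul_of_nonneg_left hsum1 hC1pos
        · rw [hsum2]
    _ ≤ _ := hfinal
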